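/- Under the assumptions of the previous statement (A symmetric with A(ℓ𝟙−x)=e_L−e_R, Ax=e_R−e_L, Ā invertible), the boundary entries of A satisfy a_l = a_Lᵀ Ā⁻¹ a_L + 1/ℓ, a_r = a_Rᵀ Ā⁻¹ a_R + 1/ℓ, and a_c = a_Rᵀ Ā⁻¹ a_L − 1/ℓ = a_Lᵀ Ā⁻¹ a_R − 1/ℓ. -/
import Mathlib

open Matrix

theorem stmt5 (n : ℕ) (hn : 2 ≤ n) (h : ℝ) (hh : 0 < h)
    (A : Matrix (Fin (n+1)) (Fin (n+1)) ℝ) (hAsym : Aᵀ = A)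
    (x : Fin (n+1) → ℝ) (hx : x = fun (i : Fin (n+1)) => h * ((i : ℕ) : ℝ))
    (ℓ : ℝ) (hℓ : ℓ = n * h)
    (eL eR : Fin (n+1) → ℝ)
    (heL : eL = fun i => if i = 0 then 1 else 0)
    (heR : eR = fun i => if i = Fin.last n then 1 else 0)
    (hA1 : A *ᵥ (fun i => ℓ * 1 - x i) = eL - eR)
    (hAx : A *ᵥ x = eR - eL)
    (emb : Fin (n-1) → Fin (n+1))
    (hemb : emb = fun i => ⟨(i : ℕ) + 1, by have := i.isLt; omega⟩)
    (Ab : Matrix (Fin (n-1)) (Fin (n-1)) ℝ)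
    (hAb : Ab = Matrix.of fun i j => A (emb i) (emb j))
    (hAbinv : IsUnit Ab.det)
    (aL aR : Fin (n-1) → ℝ)
    (haL : aL = fun i => A (emb i) 0)
    (haR : aR = fun i => A (emb i) (Fin.last n)) :
    A 0 0 = aL ⬝ᵥ (Ab⁻¹ *ᵥ aL) + 1 / ℓ
      ∧ A (Fin.last n) (Fin.last n) = aR ⬝ᵥ (Ab⁻¹ *ᵥ aR) + 1 / ℓ
      ∧ A 0 (Fin.last n) = aR ⬝ᵥ (Ab⁻¹ *ᵥ aL) - 1 / ℓ
      ∧ A 0 (Fin.last n) = aL ⬝ᵥ (Ab⁻¹ *ᵥ aR) - 1 / ℓ := by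
  obtain ⟨m, rfl⟩ : ∃ m, n = m + 1 := ⟨n - 1, by omega⟩
  have hℓ0 : ℓ ≠ 0 := by rw [hℓ]; positivity
  have hsym : ∀ i j, A i j = A j i := fun i j => congrFun (congrFun hAsym j) i
  -- sum splitting
  have hsplit : ∀ (v : Fin (m+2) → ℝ) (r : Fin (m+2)),
      (A *ᵥ v) r = A r 0 * v 0 + (∑ j : Fin (m+1-1), A r (emb j) * v (emb j))
        + A r (Fin.last (m+1)) * v (Fin.last (m+1)) := by
    intro v r
    have he : ∀ j : Fin (m+1-1), Fin.succ (Fin.castSucc j) = emb j := by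
      intro j; rw [hemb]; ext; simp
    simp only [mulVec, dotProduct]
    rw [Fin.sum_univ_succ, Fin.sum_univ_castSucc]
    simp only [he, Fin.succ_last]
    rw [← add_assoc]
    rfl
  -- values of x and boundary vectors
  have hx0 : x 0 = 0 := by rw [hx]; simp
  have hxl : x (Fin.last (m+1)) = ℓ := by
    rw [hx, hℓ]; simp [Fin.last]; ring
  have hemb0 : ∀ j : Fin (m+1-1), emb j ≠ 0 := by
    intro j; rw [hemb]; simp [Fin.ext_iff]
  have hembl : ∀ j : Fin (m+1-1), emb j ≠ Fin.last (m+1) := by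
    intro j; rw [hemb]; simp [Fin.ext_iff]; omega
  have h0l : (0 : Fin (m+2)) ≠ Fin.last (m+1) := by simp [Fin.ext_iff]
  -- interior rows of hAx
  have hrowR : ∀ i : Fin (m+1-1),
      (∑ j : Fin (m+1-1), Ab i j * x (emb j)) = -(ℓ * aR i) := by
    intro i
    have := congrFun hAx (emb i)
    rw [hsplit] at this
    rw [heL, heR] at this
    simp only [Pi.sub_apply, if_neg (hemb0 i), if_neg (hembl i)] at this
    rw [hx0, hxl] at this
    simp only [hAb, Matrix.of_apply, haR]
    linarith [this]
  have hrowL : ∀ i : Fin (m+1-1),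
      (∑ j : Fin (m+1-1), Ab i j * (ℓ - x (emb j))) = -(ℓ * aL i) := by
    intro i
    have := congrFun hA1 (emb i)
    rw [hsplit] at this
    rw [heL, heR] at this
    simp only [Pi.sub_apply, if_neg (hemb0 i), if_neg (hembl i)] at this
    rw [hx0, hxl] at this
    simp only [hAb, Matrix.of_apply, haL]
    simp only [mul_one] at this
    linarith [this]
  -- inverse application
  have key : ∀ v w : Fin (m+1-1) → ℝ, Ab *ᵥ v = w → Ab⁻¹ *ᵥ w = v := by
    intro v w hw
    rw [← hw, Matrix.mulVec_mulVec, Matrix.nonsing_inv_mul Ab hAbinv, Matrix.one_mulVec]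
  have hinvR : Ab⁻¹ *ᵥ aR = fun j => (-ℓ)⁻¹ * x (emb j) := by
    apply key
    funext i
    simp only [mulVec, dotProduct]
    have : (∑ j : Fin (m+1-1), Ab i j * ((-ℓ)⁻¹ * x (emb j)))
        = (-ℓ)⁻¹ * (∑ j : Fin (m+1-1), Ab i j * x (emb j)) := by
      rw [Finset.mul_sum]; apply Finset.sum_congr rfl; intro j _; ring
    rw [this, hrowR i]
    field_simp
  have hinvL : Ab⁻¹ *ᵥ aL = fun j => (-ℓ)⁻¹ * (ℓ - x (emb j)) := by
    apply key
    funext i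
    simp only [mulVec, dotProduct]
    have : (∑ j : Fin (m+1-1), Ab i j * ((-ℓ)⁻¹ * (ℓ - x (emb j))))
        = (-ℓ)⁻¹ * (∑ j : Fin (m+1-1), Ab i j * (ℓ - x (emb j))) := by
      rw [Finset.mul_sum]; apply Finset.sum_congr rfl; intro j _; ring
    rw [this, hrowL i]
    field_simp
  -- boundary rows
  have hrow0x : A 0 0 * 0 + (∑ j : Fin (m+1-1), A 0 (emb j) * x (emb j))
      + A 0 (Fin.last (m+1)) * ℓ = -1 := by
    have := congrFun hAx 0
    rw [hsplit] at this
    rw [heL, heR] at this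
    simp only [Pi.sub_apply, if_pos rfl, if_neg h0l] at this
    rw [hx0, hxl] at this
    norm_num at this
    linarith [this]
  have hrowlx : A (Fin.last (m+1)) 0 * 0 + (∑ j : Fin (m+1-1), A (Fin.last (m+1)) (emb j) * x (emb j))
      + A (Fin.last (m+1)) (Fin.last (m+1)) * ℓ = 1 := by
    have := congrFun hAx (Fin.last (m+1))
    rw [hsplit] at this
    rw [heL, heR] at this
    simp only [Pi.sub_apply, if_pos rfl, if_neg (Ne.symm h0l)] at this
    rw [hx0, hxl] at this
    norm_num at this
    linarith [this]
  have hrow01 : A 0 0 * ℓ + (∑ j : Fin (m+1-1), A 0 (emb j) * (ℓ - x (emb j)))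
      + A 0 (Fin.last (m+1)) * 0 = 1 := by
    have := congrFun hA1 0
    rw [hsplit] at this
    rw [heL, heR] at this
    simp only [Pi.sub_apply, if_pos rfl, if_neg h0l] at this
    rw [hx0, hxl] at this
    simp only [mul_one] at this
    norm_num at this
    linarith [this]
  have hrowl1 : A (Fin.last (m+1)) 0 * ℓ + (∑ j : Fin (m+1-1), A (Fin.last (m+1)) (emb j) * (ℓ - x (emb j)))
      + A (Fin.last (m+1)) (Fin.last (m+1)) * 0 = -1 := by
    have := congrFun hA1 (Fin.last (m+1))
    rw [hsplit] at this
    rw [heL, heR] at this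
    simp only [Pi.sub_apply, if_pos rfl, if_neg (Ne.symm h0l)] at this
    rw [hx0, hxl] at this
    simp only [mul_one] at this
    norm_num at this
    linarith [this]
  -- dot products
  have dLL : aL ⬝ᵥ (Ab⁻¹ *ᵥ aL) = (-ℓ)⁻¹ * (∑ j : Fin (m+1-1), A 0 (emb j) * (ℓ - x (emb j))) := by
    rw [hinvL]
    simp only [dotProduct, haL, Finset.mul_sum]
    apply Finset.sum_congr rfl; intro j _
    rw [hsym 0 (emb j)]; ring
  have dRR : aR ⬝ᵥ (Ab⁻¹ *ᵥ aR) = (-ℓ)⁻¹ * (∑ j : Fin (m+1-1), A (Fin.last (m+1)) (emb j) * x (emb j)) := by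
    rw [hinvR]
    simp only [dotProduct, haR, Finset.mul_sum]
    apply Finset.sum_congr rfl; intro j _
    rw [hsym (Fin.last (m+1)) (emb j)]; ring
  have dRL : aR ⬝ᵥ (Ab⁻¹ *ᵥ aL) = (-ℓ)⁻¹ * (∑ j : Fin (m+1-1), A (Fin.last (m+1)) (emb j) * (ℓ - x (emb j))) := by
    rw [hinvL]
    simp only [dotProduct, haR, Finset.mul_sum]
    apply Finset.sum_congr rfl; intro j _
    rw [hsym (Fin.last (m+1)) (emb j)]; ring
  have dLR : aL ⬝ᵥ (Ab⁻¹ *ᵥ aR) = (-ℓ)⁻¹ * (∑ j : Fin (m+1-1), A 0 (emb j) * x (emb j)) := by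
    rw [hinvR]
    simp only [dotProduct, haL, Finset.mul_sum]
    apply Finset.sum_congr rfl; intro j _
    rw [hsym 0 (emb j)]; ring
  have h0lsym : A (Fin.last (m+1)) 0 = A 0 (Fin.last (m+1)) := hsym _ _
  refine ⟨?_, ?_, ?_, ?_⟩
  · have hS : (∑ j : Fin (m+1-1), A 0 (emb j) * (ℓ - x (emb j))) = 1 - A 0 0 * ℓ := by
      linarith [hrow01]
    rw [dLL, hS]; linear_combination (-(A 0 0)) * mul_inv_cancel₀ hℓ0
  · have hS : (∑ j : Fin (m+1-1), A (Fin.last (m+1)) (emb j) * x (emb j))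
        = 1 - A (Fin.last (m+1)) (Fin.last (m+1)) * ℓ := by linarith [hrowlx]
    rw [dRR, hS]; linear_combination (-(A (Fin.last (m+1)) (Fin.last (m+1)))) * mul_inv_cancel₀ hℓ0
  · have hS : (∑ j : Fin (m+1-1), A (Fin.last (m+1)) (emb j) * (ℓ - x (emb j)))
        = -1 - A 0 (Fin.last (m+1)) * ℓ := by rw [h0lsym] at hrowl1; linarith [hrowl1]
    rw [dRL, hS]; linear_combination (-(A 0 (Fin.last (m+1)))) * mul_inv_cancel₀ hℓ0
  · have hS : (∑ j : Fin (m+1-1), A 0 (emb j) * x (emb j))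
        = -1 - A 0 (Fin.last (m+1)) * ℓ := by linarith [hrow0x]
    rw [dLR, hS]; linear_combination (-(A 0 (Fin.last (m+1)))) * mul_inv_cancel₀ hℓ0
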